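/- For nonzero vectors x and y in a real normed space X, ‖x + y‖ ≤ ‖x‖ + ‖y‖ − (2 − ‖x/‖x‖ + y/‖y‖‖)·min(‖x‖, ‖y‖). -/

import Mathlib

lemma aux_key {X : Type*} [NormedAddCommGroup X] [NormedSpace ℝ X] (x y : X)
    (hx : x ≠ 0) (hy : y ≠ 0) (h : ‖y‖ ≤ ‖x‖) :
    ‖x + y‖ ≤ (‖x‖ - ‖y‖) + ‖y‖ * ‖(‖x‖⁻¹ • x) + (‖y‖⁻¹ • y)‖ := by
  have ha : (0:ℝ) < ‖x‖ := norm_pos_iff.mpr hx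
  have hb : (0:ℝ) < ‖y‖ := norm_pos_iff.mpr hy
  have hu : ‖(‖x‖⁻¹ • x)‖ = 1 := by
    rw [norm_smul, Real.norm_eq_abs, abs_of_pos (inv_pos.mpr ha), inv_mul_cancel₀ ha.ne']
  have key : x + y = (‖x‖ - ‖y‖) • (‖x‖⁻¹ • x) + ‖y‖ • ((‖x‖⁻¹ • x) + (‖y‖⁻¹ • y)) := by
    rw [smul_add, smul_smul, smul_smul, smul_smul, mul_inv_cancel₀ hb.ne', one_smul,
      ← add_assoc, ← add_smul]
    have h1 : (‖x‖ - ‖y‖) * ‖x‖⁻¹ + ‖y‖ * ‖x‖⁻¹ = 1 := by field_simp; ring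
    rw [h1, one_smul]
  calc ‖x + y‖ = ‖(‖x‖ - ‖y‖) • (‖x‖⁻¹ • x) + ‖y‖ • ((‖x‖⁻¹ • x) + (‖y‖⁻¹ • y))‖ := by rw [← key]
    _ ≤ ‖(‖x‖ - ‖y‖) • (‖x‖⁻¹ • x)‖ + ‖‖y‖ • ((‖x‖⁻¹ • x) + (‖y‖⁻¹ • y))‖ := norm_add_le _ _
    _ = (‖x‖ - ‖y‖) + ‖y‖ * ‖(‖x‖⁻¹ • x) + (‖y‖⁻¹ • y)‖ := by
        simp only [norm_smul, Real.norm_eq_abs]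
        rw [abs_of_nonneg (sub_nonneg.mpr h), abs_of_pos hb, abs_of_pos (inv_pos.mpr ha),
          inv_mul_cancel₀ ha.ne', mul_one]

theorem stmt_2 {X : Type*} [NormedAddCommGroup X] [NormedSpace ℝ X] (x y : X)
    (hx : x ≠ 0) (hy : y ≠ 0) :
    ‖x + y‖ ≤ ‖x‖ + ‖y‖ - (2 - ‖(‖x‖⁻¹ • x) + (‖y‖⁻¹ • y)‖) * min ‖x‖ ‖y‖ := by
  rcases le_total ‖y‖ ‖x‖ with h | h
  · rw [min_eq_right h]
    have := aux_key x y hx hy h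
    nlinarith [this]
  · rw [min_eq_left h]
    have := aux_key y x hy hx h
    rw [add_comm y x, add_comm (‖y‖⁻¹ • y)] at this
    nlinarith [this]
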